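/- Fix δ₁ ∈ (0,1). The pointwise Bayes risk of the vector scaling loss, L̄(η) = inf_{η̂∈(0,1)} [η log(1 + ((1−η̂)/η̂)^{δ₁}) − (1−η) log(1−η̂)], satisfies lim_{η→0⁺} L̄(η) / (−δ₁ η log η) = 1. -/

import Mathlib

open Filter Topology

/-- The pointwise risk of the vector scaling (VS) loss with multiplicative
parameter `δ` at class probability `η` and prediction `v`:
`η log(1 + ((1-v)/v)^δ) - (1-η) log(1-v)`. -/
noncomputable def vsPointwiseRisk (δ η v : ℝ) : ℝ :=
  η * Real.log (1 + ((1 - v) / v) ^ δ) - (1 - η) * Real.log (1 - v)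


lemma vs_risk_lower (δ η v : ℝ) (hδ : δ ∈ Set.Ioo (0:ℝ) 1)
    (hη : η ∈ Set.Ioo (0:ℝ) (1/4)) (hv : v ∈ Set.Ioo (0:ℝ) 1) :
    δ * η * (-Real.log η) + η * δ * (1 - Real.log 2 - Real.log δ)
      ≤ vsPointwiseRisk δ η v := by
  obtain ⟨hδ0, hδ1⟩ := hδ
  obtain ⟨hη0, hη4⟩ := hη
  obtain ⟨hv0, hv1⟩ := hv
  have h1v : 0 < 1 - v := by linarith
  have hq : 0 < (1 - v) / v := div_pos h1v hv0
  have ht : 0 < ((1 - v) / v) ^ δ := Real.rpow_pos_of_pos hq δ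
  obtain ⟨a, ha_def⟩ : ∃ a : ℝ, a = η * δ := ⟨_, rfl⟩
  obtain ⟨c, hc_def⟩ : ∃ c : ℝ, c = 1 - η * (1 + δ) := ⟨_, rfl⟩
  have ha : 0 < a := ha_def ▸ mul_pos hη0 hδ0
  have hc : (1:ℝ)/2 < c := by rw [hc_def]; nlinarith
  have hc0 : 0 < c := by linarith
  -- first term lower bound
  have hlog1 : Real.log (((1 - v) / v) ^ δ) ≤ Real.log (1 + ((1 - v) / v) ^ δ) :=
    Real.log_le_log ht (by linarith)
  have hlogt : Real.log (((1 - v) / v) ^ δ) = δ * (Real.log (1 - v) - Real.log v) := by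
    rw [Real.log_rpow hq, Real.log_div (ne_of_gt h1v) (ne_of_gt hv0)]
  have hstep1 : η * (δ * (Real.log (1 - v) - Real.log v))
      ≤ η * Real.log (1 + ((1 - v) / v) ^ δ) := by
    apply mul_le_mul_of_nonneg_left _ hη0.le
    rw [← hlogt]; exact hlog1
  -- log(1-v) ≤ -v
  have hlv : Real.log (1 - v) ≤ -v := by
    have := Real.log_le_sub_one_of_pos h1v; linarith
  -- key: a - a*log(a/c) ≤ c*v - a*log v
  have hvca : 0 < v * c / a := by positivity
  have hkey : a - a * Real.log (a / c) ≤ c * v - a * Real.log v := by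
    have h := Real.log_le_sub_one_of_pos hvca
    have h2 : a * Real.log (v * c / a) ≤ v * c - a := by
      have h3 := mul_le_mul_of_nonneg_left h ha.le
      have h4 : a * (v * c / a - 1) = v * c - a := by field_simp
      linarith [h4 ▸ h3]
    have hsplit : Real.log (v * c / a) = Real.log v - Real.log (a / c) := by
      rw [Real.log_div (by positivity) (ne_of_gt ha),
          Real.log_mul (ne_of_gt hv0) (ne_of_gt hc0),
          Real.log_div (ne_of_gt ha) (ne_of_gt hc0)]
      ring
    rw [hsplit] at h2
    nlinarith
  have hlogac : Real.log (a / c) = Real.log η + Real.log δ - Real.log c := by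
    rw [Real.log_div (ne_of_gt ha) (ne_of_gt hc0), ha_def,
        Real.log_mul (ne_of_gt hη0) (ne_of_gt hδ0)]
  have hlogc : -Real.log 2 ≤ Real.log c := by
    have h5 : Real.log (1/2) ≤ Real.log c := Real.log_le_log (by norm_num) hc.le
    rw [one_div, Real.log_inv] at h5
    exact h5
  -- assemble
  have hmain : a * Real.log (1 - v) - a * Real.log v - (1 - η) * Real.log (1 - v)
      = -(c * Real.log (1 - v)) - a * Real.log v := by
    rw [hc_def, ha_def]; ring
  have hcl : c * v ≤ -(c * Real.log (1 - v)) := by nlinarith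
  have expand : η * (δ * (Real.log (1 - v) - Real.log v))
      = a * Real.log (1 - v) - a * Real.log v := by rw [ha_def]; ring
  unfold vsPointwiseRisk
  have final1 : a - a * (Real.log η + Real.log δ - Real.log c)
      ≤ η * Real.log (1 + ((1 - v) / v) ^ δ) - (1 - η) * Real.log (1 - v) := by
    rw [← hlogac]
    rw [expand] at hstep1
    linarith [hkey, hstep1, hcl, hmain]
  have final2 : δ * η * (-Real.log η) + η * δ * (1 - Real.log 2 - Real.log δ)
      ≤ a - a * (Real.log η + Real.log δ - Real.log c) := by
    rw [ha_def]
    nlinarith [mul_le_mul_of_nonneg_left hlogc ha.le]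
  linarith

lemma vs_risk_upper (δ η : ℝ) (hδ : δ ∈ Set.Ioo (0:ℝ) 1)
    (hη : η ∈ Set.Ioo (0:ℝ) (1/4)) :
    vsPointwiseRisk δ η η ≤ δ * η * (-Real.log η) + η * (Real.log 2 + 2) := by
  obtain ⟨hδ0, hδ1⟩ := hδ
  obtain ⟨hη0, hη4⟩ := hη
  have h1η : 0 < 1 - η := by linarith
  have hq : 0 < (1 - η) / η := div_pos h1η hη0
  have hinv : 0 < η⁻¹ := by positivity
  have h1 : (1 - η) / η ≤ η⁻¹ := by
    rw [div_le_iff₀ hη0, inv_mul_cancel₀ (ne_of_gt hη0)]; linarith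
  have h2 : ((1 - η) / η) ^ δ ≤ η⁻¹ ^ δ := Real.rpow_le_rpow hq.le h1 hδ0.le
  have h3 : (1:ℝ) ≤ η⁻¹ ^ δ := by
    calc (1:ℝ) = 1 ^ δ := (Real.one_rpow δ).symm
    _ ≤ η⁻¹ ^ δ := Real.rpow_le_rpow zero_le_one (by rw [le_inv_comm₀] <;> linarith) hδ0.le
  have hlog : Real.log (1 + ((1 - η) / η) ^ δ) ≤ Real.log (2 * η⁻¹ ^ δ) :=
    Real.log_le_log (by positivity) (by linarith)
  have hlog2 : Real.log (2 * η⁻¹ ^ δ) = Real.log 2 + δ * (-Real.log η) := by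
    rw [Real.log_mul (by norm_num) (by positivity), Real.log_rpow hinv, Real.log_inv]
  -- second term
  have hloginv : Real.log (1 - η) ≥ -(2 * η) := by
    have h := Real.log_le_sub_one_of_pos (show 0 < (1 - η)⁻¹ by positivity)
    rw [Real.log_inv] at h
    have h6 : (1 - η)⁻¹ - 1 ≤ 2 * η := by
      have h6a : (1 - η)⁻¹ - 1 = η / (1 - η) := by field_simp; ring
      rw [h6a, div_le_iff₀ h1η]; nlinarith
    linarith
  have hlogneg : Real.log (1 - η) ≤ 0 := by
    have := Real.log_le_sub_one_of_pos h1η; linarith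
  have hsecond : -(1 - η) * Real.log (1 - η) ≤ 2 * η := by nlinarith
  unfold vsPointwiseRisk
  have hfirst : η * Real.log (1 + ((1 - η) / η) ^ δ)
      ≤ η * (Real.log 2 + δ * (-Real.log η)) := by
    apply mul_le_mul_of_nonneg_left _ hη0.le
    rw [← hlog2]; exact hlog
  nlinarith

lemma tendsto_one_add_div_neg_log (c : ℝ) :
    Filter.Tendsto (fun η : ℝ => 1 + c / (-Real.log η)) (nhdsWithin 0 (Set.Ioi 0)) (nhds 1) := by
  have hlogtop : Filter.Tendsto (fun η : ℝ => -Real.log η) (nhdsWithin 0 (Set.Ioi 0)) Filter.atTop :=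
    tendsto_neg_atBot_atTop.comp Real.tendsto_log_nhdsGT_zero
  have hdiv : Filter.Tendsto (fun η : ℝ => c / (-Real.log η)) (nhdsWithin 0 (Set.Ioi 0)) (nhds 0) :=
    Filter.Tendsto.div_atTop tendsto_const_nhds hlogtop
  simpa using tendsto_const_nhds.add hdiv

/-- Pointwise Bayes risk of the VS loss: infimum of the pointwise risk over
predictions in `(0,1)`. -/
noncomputable def vsBayesRisk (δ η : ℝ) : ℝ :=
  sInf (vsPointwiseRisk δ η '' Set.Ioo (0 : ℝ) 1)

/-- Fix `δ₁ ∈ (0,1)`. The pointwise Bayes risk of the vector scaling loss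
satisfies `lim_{η→0⁺} L̄(η) / (-δ₁ η log η) = 1`. -/
theorem vs_loss_bayes_risk_asymptotics (δ₁ : ℝ) (hδ : δ₁ ∈ Set.Ioo (0 : ℝ) 1) :
    Tendsto (fun η : ℝ => vsBayesRisk δ₁ η / (-δ₁ * η * Real.log η))
      (𝓝[>] (0 : ℝ)) (𝓝 1) := by
  obtain ⟨hδ0, hδ1⟩ := hδ
  have hK := tendsto_one_add_div_neg_log (1 - Real.log 2 - Real.log δ₁)
  have hM := tendsto_one_add_div_neg_log ((Real.log 2 + 2) / δ₁)
  apply tendsto_of_tendsto_of_tendsto_of_le_of_le' hK hM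
  · filter_upwards [Ioo_mem_nhdsGT_of_mem (show (0:ℝ) ∈ Set.Ico 0 (1/4) by norm_num)]
      with η hη
    obtain ⟨hη0, hη4⟩ := hη
    have hlogη : Real.log η < 0 := Real.log_neg hη0 (by linarith)
    have hL : 0 < -Real.log η := by linarith
    have hLne : Real.log η ≠ 0 := ne_of_lt hlogη
    have hδne : δ₁ ≠ 0 := ne_of_gt hδ0
    have hD : 0 < -δ₁ * η * Real.log η := by
      nlinarith [mul_pos (mul_pos hδ0 hη0) hL]
    have hlb : ∀ x ∈ vsPointwiseRisk δ₁ η '' Set.Ioo (0:ℝ) 1,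
        δ₁ * η * (-Real.log η) + η * δ₁ * (1 - Real.log 2 - Real.log δ₁) ≤ x := by
      rintro x ⟨v, hv, rfl⟩
      exact vs_risk_lower δ₁ η v ⟨hδ0, hδ1⟩ ⟨hη0, hη4⟩ hv
    have hne : (vsPointwiseRisk δ₁ η '' Set.Ioo (0:ℝ) 1).Nonempty :=
      ⟨_, ⟨1/2, by norm_num, rfl⟩⟩
    have hbayes_lb : δ₁ * η * (-Real.log η) + η * δ₁ * (1 - Real.log 2 - Real.log δ₁)
        ≤ vsBayesRisk δ₁ η := le_csInf hne hlb
    rw [le_div_iff₀ hD]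
    have heq : (1 + (1 - Real.log 2 - Real.log δ₁) / (-Real.log η)) * (-δ₁ * η * Real.log η)
        = δ₁ * η * (-Real.log η) + η * δ₁ * (1 - Real.log 2 - Real.log δ₁) := by
      field_simp
      ring
    rw [heq]
    exact hbayes_lb
  · filter_upwards [Ioo_mem_nhdsGT_of_mem (show (0:ℝ) ∈ Set.Ico 0 (1/4) by norm_num)]
      with η hη
    obtain ⟨hη0, hη4⟩ := hη
    have hlogη : Real.log η < 0 := Real.log_neg hη0 (by linarith)
    have hL : 0 < -Real.log η := by linarith
    have hLne : Real.log η ≠ 0 := ne_of_lt hlogη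
    have hδne : δ₁ ≠ 0 := ne_of_gt hδ0
    have hD : 0 < -δ₁ * η * Real.log η := by
      nlinarith [mul_pos (mul_pos hδ0 hη0) hL]
    have hlb : ∀ x ∈ vsPointwiseRisk δ₁ η '' Set.Ioo (0:ℝ) 1,
        δ₁ * η * (-Real.log η) + η * δ₁ * (1 - Real.log 2 - Real.log δ₁) ≤ x := by
      rintro x ⟨v, hv, rfl⟩
      exact vs_risk_lower δ₁ η v ⟨hδ0, hδ1⟩ ⟨hη0, hη4⟩ hv
    have hbdd : BddBelow (vsPointwiseRisk δ₁ η '' Set.Ioo (0:ℝ) 1) :=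
      ⟨_, fun x hx => hlb x hx⟩
    have hmem : vsPointwiseRisk δ₁ η η ∈ vsPointwiseRisk δ₁ η '' Set.Ioo (0:ℝ) 1 :=
      ⟨η, ⟨hη0, by linarith⟩, rfl⟩
    have hbayes_ub : vsBayesRisk δ₁ η ≤ vsPointwiseRisk δ₁ η η := csInf_le hbdd hmem
    have hub := vs_risk_upper δ₁ η ⟨hδ0, hδ1⟩ ⟨hη0, hη4⟩
    rw [div_le_iff₀ hD]
    have heq : (1 + (Real.log 2 + 2) / δ₁ / (-Real.log η)) * (-δ₁ * η * Real.log η)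
        = δ₁ * η * (-Real.log η) + η * (Real.log 2 + 2) := by
      field_simp
      ring
    rw [heq]
    linarith
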